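/- In the two-person model, the program-level SCM with stateful PRNG and the intended scientific SCM induce the same marginal distribution of I2 within each fixed scenario (both give P(I2 = 1) = p2 when R1, R2, R3 are i.i.d. Unif(0,1)), even though the cross-scenario joint distributions of (I2^(0), I2^(1)) differ: under event-keyed noise I2^(0) = I2^(1) surely, while under stateful indexing I2^(0) and I2^(1) can disagree with positive probability when 0 < p1(1−VE) < p1 < 1 and 0 < p2 < 1. -/

import Mathlib

open MeasureTheory ProbabilityTheory

/-- In the two-person model with `R1, R2, R3` i.i.d. Unif(0,1): the stateful-PRNG
program and the event-keyed program both give `P(I2 = 1) = p2` within each fixed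
scenario, but the cross-scenario couplings differ: under event-keyed noise
`I2⁽⁰⁾ = I2⁽¹⁾` surely, while under stateful draw indexing `I2⁽⁰⁾` and `I2⁽¹⁾`
disagree with positive probability. -/
theorem stmt16 {Ω : Type*} [MeasureSpace Ω] [IsProbabilityMeasure (ℙ : Measure Ω)]
    (R : Fin 3 → Ω → ℝ) (hRmeas : ∀ i, Measurable (R i))
    (hRindep : iIndepFun R ℙ)
    (hRunif : ∀ i, Measure.map (R i) ℙ = volume.restrict (Set.Icc (0 : ℝ) 1))
    (p1 p2 VE : ℝ) (hp1 : p1 ∈ Set.Ioo (0 : ℝ) 1) (hp2 : p2 ∈ Set.Ioo (0 : ℝ) 1)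
    (hVE : VE ∈ Set.Ioo (0 : ℝ) 1)
    -- stateful program: scenario A ∈ {0,1}; I1 = 1[R1 < p1(1 − A·VE)],
    -- I2 = 1[R_{2+I1} < p2] (draw index shifts with I1)
    (statefulI2 : ℕ → Ω → ℝ)
    (hstateful : ∀ A ω, statefulI2 A ω =
      if (if R 0 ω < p1 * (1 - A * VE) then R 2 ω else R 1 ω) < p2 then 1 else 0)
    -- event-keyed program: person 2 has dedicated noise R3 in both scenarios
    (keyedI2 : ℕ → Ω → ℝ)
    (hkeyed : ∀ A ω, keyedI2 A ω = if R 2 ω < p2 then 1 else 0) :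
    -- identical within-scenario marginals
    ℙ {ω | statefulI2 0 ω = 1} = ENNReal.ofReal p2 ∧
    ℙ {ω | statefulI2 1 ω = 1} = ENNReal.ofReal p2 ∧
    ℙ {ω | keyedI2 0 ω = 1} = ENNReal.ofReal p2 ∧
    ℙ {ω | keyedI2 1 ω = 1} = ENNReal.ofReal p2 ∧
    -- event-keyed: perfect cross-scenario coupling
    (∀ ω, keyedI2 0 ω = keyedI2 1 ω) ∧
    -- stateful: disagreement with positive probability
    0 < ℙ {ω | statefulI2 0 ω ≠ statefulI2 1 ω} := by
  obtain ⟨hp1pos, hp1lt⟩ := hp1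
  obtain ⟨hp2pos, hp2lt⟩ := hp2
  obtain ⟨hVEpos, hVElt⟩ := hVE
  have hmap : ∀ (i : Fin 3) (S : Set ℝ), MeasurableSet S →
      ℙ (R i ⁻¹' S) = volume (S ∩ Set.Icc (0:ℝ) 1) := by
    intro i S hS
    rw [← Measure.map_apply (hRmeas i) hS, hRunif i, Measure.restrict_apply hS]
  have hIio : ∀ (i : Fin 3) (c : ℝ), 0 ≤ c → c ≤ 1 →
      ℙ (R i ⁻¹' Set.Iio c) = ENNReal.ofReal c := by
    intro i c hc0 hc1
    rw [hmap i _ measurableSet_Iio]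
    have heq : Set.Iio c ∩ Set.Icc (0:ℝ) 1 = Set.Ico 0 c := by
      ext x
      simp only [Set.mem_inter_iff, Set.mem_Iio, Set.mem_Icc, Set.mem_Ico]
      constructor
      · rintro ⟨h1, h2, _⟩; exact ⟨h2, h1⟩
      · rintro ⟨h1, h2⟩; exact ⟨h2, h1, le_trans h2.le hc1⟩
    rw [heq, Real.volume_Ico, sub_zero]
  have hIci : ∀ (i : Fin 3) (c : ℝ), 0 ≤ c → c ≤ 1 →
      ℙ (R i ⁻¹' Set.Ici c) = ENNReal.ofReal (1 - c) := by
    intro i c hc0 hc1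
    rw [hmap i _ measurableSet_Ici]
    have heq : Set.Ici c ∩ Set.Icc (0:ℝ) 1 = Set.Icc c 1 := by
      ext x
      simp only [Set.mem_inter_iff, Set.mem_Ici, Set.mem_Icc]
      constructor
      · rintro ⟨h1, _, h3⟩; exact ⟨h1, h3⟩
      · rintro ⟨h1, h2⟩; exact ⟨h1, le_trans hc0 h1, h2⟩
    rw [heq, Real.volume_Icc]
  -- keyed marginal
  have hkeyedset : ∀ A : ℕ, {ω | keyedI2 A ω = 1} = R 2 ⁻¹' Set.Iio p2 := by
    intro A
    ext ω
    simp only [Set.mem_setOf_eq, hkeyed A ω, Set.mem_preimage, Set.mem_Iio]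
    by_cases h : R 2 ω < p2 <;> simp [h]
  have hkeyedmarg : ∀ A : ℕ, ℙ {ω | keyedI2 A ω = 1} = ENNReal.ofReal p2 := by
    intro A
    rw [hkeyedset A, hIio 2 p2 hp2pos.le hp2lt.le]
  -- stateful marginal (for any threshold t ∈ (0,1))
  have hstat : ∀ t : ℝ, 0 < t → t < 1 →
      ℙ {ω | (if R 0 ω < t then R 2 ω else R 1 ω) < p2} = ENNReal.ofReal p2 := by
    intro t ht0 ht1
    have hset : {ω | (if R 0 ω < t then R 2 ω else R 1 ω) < p2}
        = (R 0 ⁻¹' Set.Iio t ∩ R 2 ⁻¹' Set.Iio p2)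
          ∪ (R 0 ⁻¹' Set.Ici t ∩ R 1 ⁻¹' Set.Iio p2) := by
      ext ω
      by_cases h : R 0 ω < t
      · simp [Set.mem_Iio, Set.mem_Ici, h, not_le.mpr h]
      · simp [Set.mem_Iio, Set.mem_Ici, h, not_lt.mp h]
    have hdisj : Disjoint (R 0 ⁻¹' Set.Iio t ∩ R 2 ⁻¹' Set.Iio p2)
        (R 0 ⁻¹' Set.Ici t ∩ R 1 ⁻¹' Set.Iio p2) := by
      rw [Set.disjoint_left]
      rintro ω ⟨h1, _⟩ ⟨h2, _⟩
      simp only [Set.mem_preimage, Set.mem_Iio, Set.mem_Ici] at h1 h2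
      exact absurd h2 (not_le.mpr h1)
    have hmeas2 : MeasurableSet (R 0 ⁻¹' Set.Ici t ∩ R 1 ⁻¹' Set.Iio p2) :=
      (hRmeas 0 measurableSet_Ici).inter (hRmeas 1 measurableSet_Iio)
    have hA : ℙ (R 0 ⁻¹' Set.Iio t ∩ R 2 ⁻¹' Set.Iio p2)
        = ENNReal.ofReal t * ENNReal.ofReal p2 := by
      rw [(hRindep.indepFun (show (0 : Fin 3) ≠ 2 by decide)).measure_inter_preimage_eq_mul
        (Set.Iio t) (Set.Iio p2) measurableSet_Iio measurableSet_Iio,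
        hIio 0 t ht0.le ht1.le, hIio 2 p2 hp2pos.le hp2lt.le]
    have hB : ℙ (R 0 ⁻¹' Set.Ici t ∩ R 1 ⁻¹' Set.Iio p2)
        = ENNReal.ofReal (1 - t) * ENNReal.ofReal p2 := by
      rw [(hRindep.indepFun (show (0 : Fin 3) ≠ 1 by decide)).measure_inter_preimage_eq_mul
        (Set.Ici t) (Set.Iio p2) measurableSet_Ici measurableSet_Iio,
        hIci 0 t ht0.le ht1.le, hIio 1 p2 hp2pos.le hp2lt.le]
    rw [hset, measure_union hdisj hmeas2, hA, hB,
      ← ENNReal.ofReal_mul ht0.le, ← ENNReal.ofReal_mul (by linarith),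
      ← ENNReal.ofReal_add (by positivity) (by nlinarith)]
    ring_nf
  have hstatset : ∀ A : ℕ, {ω | statefulI2 A ω = 1}
      = {ω | (if R 0 ω < p1 * (1 - (A : ℝ) * VE) then R 2 ω else R 1 ω) < p2} := by
    intro A
    ext ω
    simp only [Set.mem_setOf_eq, hstateful A ω]
    by_cases h : (if R 0 ω < p1 * (1 - (A : ℝ) * VE) then R 2 ω else R 1 ω) < p2 <;> simp [h]
  have hm0 : ℙ {ω | statefulI2 0 ω = 1} = ENNReal.ofReal p2 := by
    rw [hstatset 0]
    have h0 : p1 * (1 - ((0 : ℕ) : ℝ) * VE) = p1 := by norm_num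
    rw [h0]
    exact hstat p1 hp1pos hp1lt
  have hm1 : ℙ {ω | statefulI2 1 ω = 1} = ENNReal.ofReal p2 := by
    rw [hstatset 1]
    have h1 : p1 * (1 - ((1 : ℕ) : ℝ) * VE) = p1 * (1 - VE) := by norm_num
    rw [h1]
    exact hstat _ (by nlinarith) (by nlinarith)
  refine ⟨hm0, hm1, hkeyedmarg 0, hkeyedmarg 1, fun ω => by rw [hkeyed 0 ω, hkeyed 1 ω], ?_⟩
  -- disagreement with positive probability
  set a : ℝ := p1 * (1 - VE) with ha
  have ha0 : 0 < a := by nlinarith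
  have hap1 : a < p1 := by nlinarith
  set E : Set Ω := R 0 ⁻¹' Set.Ico a p1 ∩ (R 1 ⁻¹' Set.Iio p2 ∩ R 2 ⁻¹' Set.Ici p2) with hE
  have hEsub : E ⊆ {ω | statefulI2 0 ω ≠ statefulI2 1 ω} := by
    rintro ω ⟨h0, h1, h2⟩
    simp only [Set.mem_preimage, Set.mem_Ico, Set.mem_Iio, Set.mem_Ici] at h0 h1 h2
    simp only [Set.mem_setOf_eq, hstateful 0 ω, hstateful 1 ω]
    have e0 : p1 * (1 - ((0 : ℕ) : ℝ) * VE) = p1 := by norm_num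
    have e1 : p1 * (1 - ((1 : ℕ) : ℝ) * VE) = a := by rw [ha]; norm_num
    rw [e0, e1, if_pos h0.2, if_neg (not_lt.mpr h0.1), if_neg (not_lt.mpr h2), if_pos h1]
    norm_num
  have hIco0 : ℙ (R 0 ⁻¹' Set.Ico a p1) = ENNReal.ofReal (p1 - a) := by
    rw [hmap 0 _ measurableSet_Ico]
    have heq : Set.Ico a p1 ∩ Set.Icc (0:ℝ) 1 = Set.Ico a p1 := by
      apply Set.inter_eq_self_of_subset_left
      intro x hx
      exact ⟨le_trans ha0.le hx.1, le_of_lt (lt_of_lt_of_le hx.2 hp1lt.le)⟩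
    rw [heq, Real.volume_Ico]
  set sets : Fin 3 → Set ℝ :=
    fun i => if i = 0 then Set.Ico a p1 else if i = 1 then Set.Iio p2 else Set.Ici p2
    with hsetsdef
  have hsetsmeas : ∀ i ∈ (Finset.univ : Finset (Fin 3)), MeasurableSet (sets i) := by
    intro i _
    fin_cases i <;>
      · simp only [hsetsdef]
        norm_num
        first
          | exact measurableSet_Ico
          | exact measurableSet_Iio
          | exact measurableSet_Ici
          | skip
  have hprod := hRindep.measure_inter_preimage_eq_mul Finset.univ hsetsmeas
  have hEeq : E = ⋂ i ∈ (Finset.univ : Finset (Fin 3)), R i ⁻¹' sets i := by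
    ext ω
    simp only [hE, Set.mem_inter_iff, Set.mem_iInter, Finset.mem_univ, Set.iInter_true,
      Set.mem_preimage]
    constructor
    · rintro ⟨h0, h1, h2⟩ i
      fin_cases i <;> simpa [hsetsdef]
    · intro h
      refine ⟨?_, ?_, ?_⟩
      · simpa [hsetsdef] using h 0
      · simpa [hsetsdef] using h 1
      · simpa [hsetsdef] using h 2
  have hE1 : ℙ E = ENNReal.ofReal (p1 - a) * ENNReal.ofReal p2 * ENNReal.ofReal (1 - p2) := by
    rw [hEeq, hprod, Fin.prod_univ_three]
    have e0 : sets 0 = Set.Ico a p1 := by simp [hsetsdef]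
    have e1 : sets 1 = Set.Iio p2 := by simp [hsetsdef]
    have e2 : sets 2 = Set.Ici p2 := by simp [hsetsdef]
    rw [e0, e1, e2, hIco0, hIio 1 p2 hp2pos.le hp2lt.le, hIci 2 p2 hp2pos.le hp2lt.le]
  refine lt_of_lt_of_le ?_ (measure_mono hEsub)
  rw [hE1]
  have h1 : ENNReal.ofReal (p1 - a) ≠ 0 :=
    (ENNReal.ofReal_pos.mpr (by linarith)).ne'
  have h2 : ENNReal.ofReal p2 ≠ 0 := (ENNReal.ofReal_pos.mpr hp2pos).ne'
  have h3 : ENNReal.ofReal (1 - p2) ≠ 0 := (ENNReal.ofReal_pos.mpr (by linarith)).ne'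
  exact ENNReal.mul_pos (mul_ne_zero h1 h2) h3
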